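/- Let m ≥ 2 be an integer, let G be a finite set, and let σ² = (σ_i²)_{i∈G} be positive reals. Suppose there exists G' ⊆ G with |G'| > 2m such that σ_i² ≤ 2σ_j² for all i ∈ G and j ∈ G'. Then for every i ∈ G, ∑_{F⊆G\{i\}, |F|=m−1} ∏_{l∈F} σ_l² ≥ (1/3) · ∑_{F⊆G, |F|=m−1} ∏_{l∈F} σ_l², where both sums range over (m−1)-element subsets F of the indicated sets. -/

import Mathlib

open Finset Real

/-- **Elementary symmetric sums avoiding one index.** If `G` contains a subset `G'` with
`|G'| > 2m` such that `σ_i² ≤ 2σ_j²` for all `i ∈ G`, `j ∈ G'`, then for every `i ∈ G`,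
`∑_{F ⊆ G \ {i}, |F| = m-1} ∏_{l∈F} σ_l² ≥ (1/3) ∑_{F ⊆ G, |F| = m-1} ∏_{l∈F} σ_l²`. -/
theorem stmt_15 {ι : Type*} [DecidableEq ι] (m : ℕ) (hm : 2 ≤ m)
    (G : Finset ι) (σ : ι → ℝ) (hσ : ∀ i ∈ G, 0 < σ i)
    (G' : Finset ι) (hG'sub : G' ⊆ G) (hG'card : 2 * m < G'.card)
    (hratio : ∀ i ∈ G, ∀ j ∈ G', σ i ≤ 2 * σ j)
    (i : ι) (hi : i ∈ G) :
    ∑ F ∈ Finset.powersetCard (m - 1) (G.erase i), ∏ l ∈ F, σ l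
      ≥ (1 / 3) * ∑ F ∈ Finset.powersetCard (m - 1) G, ∏ l ∈ F, σ l := by
  set A := G.erase i with hA
  have hiA : i ∉ A := Finset.notMem_erase i G
  have hins : insert i A = G := Finset.insert_erase hi
  have hnn : ∀ F : Finset ι, F ⊆ A → 0 ≤ ∏ l ∈ F, σ l := fun F hF =>
    Finset.prod_nonneg fun l hl => (hσ l (Finset.mem_of_mem_erase (hF hl))).le
  have hk : m - 1 = (m - 2) + 1 := by omega
  -- decomposition
  have hdecomp : ∑ F ∈ powersetCard (m - 1) G, ∏ l ∈ F, σ l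
      = (∑ F ∈ powersetCard (m - 1) A, ∏ l ∈ F, σ l)
        + σ i * ∑ F ∈ powersetCard (m - 2) A, ∏ l ∈ F, σ l := by
    rw [← hins, hk, powersetCard_succ_insert hiA]
    rw [Finset.sum_union]
    · congr 1
      rw [Finset.sum_image]
      · rw [Finset.mul_sum]
        refine Finset.sum_congr rfl fun F hF => ?_
        rw [Finset.mem_powersetCard] at hF
        rw [Finset.prod_insert (fun h => hiA (hF.1 h))]
      · intro a ha b hb hab
        rw [Finset.mem_coe, Finset.mem_powersetCard] at ha hb
        have ha' : i ∉ a := fun h => hiA (ha.1 h)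
        have hb' : i ∉ b := fun h => hiA (hb.1 h)
        rw [← Finset.erase_insert ha', ← Finset.erase_insert hb', hab]
    · rw [Finset.disjoint_left]
      intro F hF hF'
      rw [Finset.mem_powersetCard] at hF
      simp only [Finset.mem_image] at hF'
      obtain ⟨a, _, rfl⟩ := hF'
      exact hiA (hF.1 (Finset.mem_insert_self i a))
  set e := ∑ F ∈ powersetCard (m - 1) A, ∏ l ∈ F, σ l with he
  have he0 : 0 ≤ e := Finset.sum_nonneg fun F hF =>
    hnn F (Finset.mem_powersetCard.1 hF).1
  -- key inequality
  have hkey : σ i * ∑ F ∈ powersetCard (m - 2) A, ∏ l ∈ F, σ l ≤ 2 * e := by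
    set C : Finset ι → Finset ι := fun F => (G'.erase i) \ F with hC
    have hCcard : ∀ F ∈ powersetCard (m - 2) A, m + 2 ≤ (C F).card := by
      intro F hF
      rw [Finset.mem_powersetCard] at hF
      have h1 : 2 * m ≤ (G'.erase i).card := by
        have := Finset.card_erase_le (s := G') (a := i)
        have := Finset.pred_card_le_card_erase (s := G') (a := i)
        omega
      have h2 := Finset.le_card_sdiff F (G'.erase i)
      have h3 := hF.2
      simp only [hC]
      omega
    have hstep1 : ((m:ℝ) + 2) * (σ i * ∑ F ∈ powersetCard (m - 2) A, ∏ l ∈ F, σ l)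
        ≤ 2 * ∑ F ∈ powersetCard (m - 2) A, ∑ j ∈ C F, σ j * ∏ l ∈ F, σ l := by
      rw [Finset.mul_sum, Finset.mul_sum, Finset.mul_sum]
      refine Finset.sum_le_sum fun F hF => ?_
      have hFA := (Finset.mem_powersetCard.1 hF).1
      have hp := hnn F hFA
      have hσi : 0 ≤ σ i := (hσ i hi).le
      calc ((m:ℝ) + 2) * (σ i * ∏ l ∈ F, σ l)
          ≤ ((C F).card : ℝ) * (σ i * ∏ l ∈ F, σ l) := by
            have := hCcard F hF
            have : ((m:ℝ) + 2) ≤ ((C F).card : ℝ) := by exact_mod_cast this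
            nlinarith [mul_nonneg hσi hp]
        _ = ∑ j ∈ C F, σ i * ∏ l ∈ F, σ l := by
            rw [Finset.sum_const, nsmul_eq_mul]
        _ ≤ ∑ j ∈ C F, 2 * (σ j * ∏ l ∈ F, σ l) := by
            refine Finset.sum_le_sum fun j hj => ?_
            have hjG' : j ∈ G' := Finset.mem_of_mem_erase (Finset.mem_sdiff.1 hj).1
            have := hratio i hi j hjG'
            nlinarith
        _ = 2 * ∑ j ∈ C F, σ j * ∏ l ∈ F, σ l := by rw [Finset.mul_sum]
    -- double counting
    have hstep2 : ∑ F ∈ powersetCard (m - 2) A, ∑ j ∈ C F, σ j * ∏ l ∈ F, σ l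
        ≤ ((m:ℝ) - 1) * e := by
      rw [Finset.sum_sigma']
      have himg : ∀ p ∈ (powersetCard (m - 2) A).sigma C,
          (⟨insert p.2 p.1, p.2⟩ : Σ _ : Finset ι, ι) ∈
            (powersetCard (m - 1) A).sigma (fun F => F) := by
        intro p hp
        rw [Finset.mem_sigma] at hp ⊢
        obtain ⟨h1, h2⟩ := hp
        rw [Finset.mem_powersetCard] at h1
        rw [hC, Finset.mem_sdiff] at h2
        have hjA : p.2 ∈ A := by
          have := Finset.mem_of_mem_erase h2.1
          have hne : p.2 ≠ i := Finset.ne_of_mem_erase h2.1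
          exact Finset.mem_erase.2 ⟨hne, hG'sub this⟩
        constructor
        · rw [Finset.mem_powersetCard]
          refine ⟨Finset.insert_subset hjA h1.1, ?_⟩
          rw [Finset.card_insert_of_notMem h2.2, h1.2]; omega
        · exact Finset.mem_insert_self _ _
      have hinj : Set.InjOn (fun p : Σ _ : Finset ι, ι => (⟨insert p.2 p.1, p.2⟩ : Σ _ : Finset ι, ι))
          ((powersetCard (m - 2) A).sigma C) := by
        intro p hp q hq hpq
        obtain ⟨p1, p2⟩ := p
        obtain ⟨q1, q2⟩ := q
        rw [Finset.mem_coe, Finset.mem_sigma] at hp hq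
        have h2p : p2 ∉ p1 := (Finset.mem_sdiff.1 hp.2).2
        have h2q : q2 ∉ q1 := (Finset.mem_sdiff.1 hq.2).2
        simp only [Sigma.mk.inj_iff] at hpq
        obtain ⟨h1, h2⟩ := hpq
        have h2' : p2 = q2 := eq_of_heq h2
        subst h2'
        have : p1 = q1 := by
          rw [← Finset.erase_insert h2p, ← Finset.erase_insert h2q, h1]
        simp [this]
      calc ∑ p ∈ (powersetCard (m - 2) A).sigma C, σ p.2 * ∏ l ∈ p.1, σ l
          = ∑ p ∈ ((powersetCard (m - 2) A).sigma C).image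
              (fun p : Σ _ : Finset ι, ι => (⟨insert p.2 p.1, p.2⟩ : Σ _ : Finset ι, ι)),
              ∏ l ∈ p.1, σ l := by
            rw [Finset.sum_image (fun a ha b hb => hinj ha hb)]
            refine Finset.sum_congr rfl fun p hp => ?_
            rw [Finset.mem_sigma] at hp
            have h2p : p.2 ∉ p.1 := (Finset.mem_sdiff.1 hp.2).2
            rw [Finset.prod_insert h2p]
        _ ≤ ∑ p ∈ (powersetCard (m - 1) A).sigma (fun F => F), ∏ l ∈ p.1, σ l := by
            refine Finset.sum_le_sum_of_subset_of_nonneg ?_ ?_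
            · intro p hp
              simp only [Finset.mem_image] at hp
              obtain ⟨q, hq, rfl⟩ := hp
              exact himg q hq
            · intro p hp _
              rw [Finset.mem_sigma, Finset.mem_powersetCard] at hp
              exact hnn _ hp.1.1
        _ = ((m:ℝ) - 1) * e := by
            rw [Finset.sum_sigma, he, Finset.mul_sum]
            refine Finset.sum_congr rfl fun F hF => ?_
            show ∑ _j ∈ F, ∏ l ∈ F, σ l = _
            rw [Finset.sum_const, nsmul_eq_mul, (Finset.mem_powersetCard.1 hF).2]
            have h1 : ((m - 1 : ℕ) : ℝ) = (m : ℝ) - 1 := by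
              rw [Nat.cast_sub (by omega)]; norm_num
            rw [h1]
    have hX0 : 0 ≤ σ i * ∑ F ∈ powersetCard (m - 2) A, ∏ l ∈ F, σ l := by
      refine mul_nonneg (hσ i hi).le (Finset.sum_nonneg fun F hF =>
        hnn F (Finset.mem_powersetCard.1 hF).1)
    have hm2 : (2:ℝ) ≤ (m:ℝ) := by exact_mod_cast hm
    nlinarith [hstep1, hstep2, he0, hX0, hm2]
  rw [hdecomp]
  nlinarith [hkey, he0]
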